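/- In the ring Λ of Laurent polynomials in two variables over ℂ, let J := ⟨z₁ − 1, z₂ − 1⟩, I₀ := ⟨z₁⁴ − 1, z₂² − 1⟩ : J (the quotient ideal of the ideal generated by the monomial differences associated to the columns (4,0),(0,2) of W₀), and I₁ := ⟨z₁⁴ − 1, z₁^{−4}z₂² − 1⟩ : J (associated to the columns (4,0),(−4,2) of W₁). Then I₀ = I₁, and this common ideal equals the ideal generated by (z₁³ + z₁² + z₁ + 1)(z₂ + 1), z₁⁴ − 1, and z₂² − 1. -/

import Mathlib

/-- The ring `Λ = ℂ[z₁^{±1}, z₂^{±1}]` of Laurent polynomials in two variables,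
realized as the group algebra of `ℤ²` over `ℂ`. -/
abbrev Laurent2 : Type := AddMonoidAlgebra ℂ (ℤ × ℤ)

/-- The Laurent monomial `z^α` for `α ∈ ℤ²`. -/
noncomputable def zmon (α : ℤ × ℤ) : Laurent2 := AddMonoidAlgebra.single α 1

/-- The ideal `J = ⟨z₁ − 1, z₂ − 1⟩`. -/
noncomputable def Jid : Ideal Laurent2 :=
  Ideal.span {zmon (1, 0) - 1, zmon (0, 1) - 1}

/-- `I₀ = ⟨z₁⁴ − 1, z₂² − 1⟩ : J` (columns `(4,0)`, `(0,2)` of `W₀`). -/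
noncomputable def I0 : Ideal Laurent2 :=
  (Ideal.span {zmon (4, 0) - 1, zmon (0, 2) - 1}).colon Jid

/-- `I₁ = ⟨z₁⁴ − 1, z₁⁻⁴z₂² − 1⟩ : J` (columns `(4,0)`, `(−4,2)` of `W₁`). -/
noncomputable def I1 : Ideal Laurent2 :=
  (Ideal.span {zmon (4, 0) - 1, zmon (-4, 2) - 1}).colon Jid

lemma zmon_mul (α β : ℤ × ℤ) : zmon α * zmon β = zmon (α + β) := by
  simp [zmon, AddMonoidAlgebra.single_mul_single]

lemma zmon_zero : zmon 0 = 1 := rfl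

noncomputable def Ibase : Ideal Laurent2 :=
  Ideal.span {zmon (4, 0) - 1, zmon (0, 2) - 1}

lemma zmon_smul_mem (β : ℤ × ℤ) (hβ : zmon β - 1 ∈ Ibase) (k : ℤ) :
    zmon (k • β) - 1 ∈ Ibase := by
  induction k using Int.induction_on with
  | zero => simp [zmon_zero]
  | succ k ih =>
      have : zmon ((k + 1 : ℤ) • β) - 1
          = zmon ((k : ℤ) • β) * (zmon β - 1) + (zmon ((k : ℤ) • β) - 1) := by
        rw [mul_sub, zmon_mul, mul_one]
        rw [show ((k : ℤ) • β + β) = (k + 1 : ℤ) • β by rw [add_smul, one_smul]]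
        ring
      rw [this]
      exact add_mem (Ideal.mul_mem_left _ _ hβ) ih
  | pred k ih =>
      have : zmon ((-(k : ℤ) - 1) • β) - 1
          = -(zmon ((-(k : ℤ) - 1) • β) * (zmon β - 1)) + (zmon ((-(k : ℤ)) • β) - 1) := by
        rw [mul_sub, zmon_mul, mul_one]
        rw [show ((-(k : ℤ) - 1) • β + β) = (-(k : ℤ)) • β by rw [sub_smul, one_smul]; abel]
        ring
      rw [this]
      exact add_mem (neg_mem (Ideal.mul_mem_left _ _ hβ)) ih

lemma gen1_mem : zmon (4, 0) - 1 ∈ Ibase := Ideal.subset_span (by simp)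
lemma gen2_mem : zmon (0, 2) - 1 ∈ Ibase := Ideal.subset_span (by simp)

lemma zmon_kl_mem (k l : ℤ) : zmon (4 * k, 2 * l) - 1 ∈ Ibase := by
  have h1 : zmon (4 * k, 0) - 1 ∈ Ibase := by
    have := zmon_smul_mem (4, 0) gen1_mem k
    simpa [Prod.smul_mk, mul_comm] using this
  have h2 : zmon (0, 2 * l) - 1 ∈ Ibase := by
    have := zmon_smul_mem (0, 2) gen2_mem l
    simpa [Prod.smul_mk, mul_comm] using this
  have : zmon (4 * k, 2 * l) - 1
      = zmon (4 * k, 0) * (zmon (0, 2 * l) - 1) + (zmon (4 * k, 0) - 1) := by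
    rw [mul_sub, zmon_mul, mul_one, Prod.mk_add_mk]
    ring_nf
  rw [this]
  exact add_mem (Ideal.mul_mem_left _ _ h2) h1

def red (α : ℤ × ℤ) : ℤ × ℤ := (α.1 % 4, α.2 % 2)

def SS : Finset (ℤ × ℤ) := {(0,0),(1,0),(2,0),(3,0),(0,1),(1,1),(2,1),(3,1)}

lemma red_mem (α : ℤ × ℤ) : red α ∈ SS := by
  simp only [SS, red, Finset.mem_insert, Finset.mem_singleton, Prod.ext_iff]
  omega

lemma zmon_sub_red_mem (α : ℤ × ℤ) : zmon α - zmon (red α) ∈ Ibase := by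
  have h : zmon α - zmon (red α)
      = zmon (red α) * (zmon (4 * (α.1 / 4), 2 * (α.2 / 2)) - 1) := by
    rw [mul_sub, zmon_mul, mul_one]
    congr 2
    · simp only [red, Prod.mk_add_mk, Prod.ext_iff]
      constructor <;> omega
  rw [h]
  exact Ideal.mul_mem_left _ _ (zmon_kl_mem _ _)

lemma reduction (f : Laurent2) :
    ∃ c : ℤ × ℤ → ℂ, f - ∑ σ ∈ SS, c σ • zmon σ ∈ Ibase := by
  induction f using AddMonoidAlgebra.induction_on with
  | of a =>
      refine ⟨fun σ => if σ = red a then 1 else 0, ?_⟩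
      have hsum : (∑ σ ∈ SS, (if σ = red a then (1:ℂ) else 0) • zmon σ) = zmon (red a) := by
        rw [Finset.sum_congr rfl (fun σ _ => by rw [ite_smul, one_smul, zero_smul])]
        rw [Finset.sum_ite_eq' SS (red a) zmon, if_pos (red_mem a)]
      rw [hsum]
      have : (AddMonoidAlgebra.of ℂ (ℤ × ℤ) (Multiplicative.ofAdd a)) = zmon a := rfl
      rw [this]
      exact zmon_sub_red_mem a
  | add f g hf hg =>
      obtain ⟨c, hc⟩ := hf
      obtain ⟨d, hd⟩ := hg
      refine ⟨c + d, ?_⟩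
      have : f + g - ∑ σ ∈ SS, (c + d) σ • zmon σ
          = (f - ∑ σ ∈ SS, c σ • zmon σ) + (g - ∑ σ ∈ SS, d σ • zmon σ) := by
        simp only [Pi.add_apply, add_smul, Finset.sum_add_distrib]
        ring
      rw [this]; exact add_mem hc hd
  | smul r f hf =>
      obtain ⟨c, hc⟩ := hf
      refine ⟨r • c, ?_⟩
      have : r • f - ∑ σ ∈ SS, (r • c) σ • zmon σ
          = r • (f - ∑ σ ∈ SS, c σ • zmon σ) := by
        simp only [Pi.smul_apply, smul_eq_mul, smul_sub, Finset.smul_sum, smul_smul]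
      rw [this, Algebra.smul_def]
      exact Ideal.mul_mem_left _ _ hc

noncomputable def evchar (u v : ℂˣ) : Multiplicative (ℤ × ℤ) →* ℂ where
  toFun := fun α => ((u ^ (Multiplicative.toAdd α).1 * v ^ (Multiplicative.toAdd α).2 : ℂˣ) : ℂ)
  map_one' := by simp
  map_mul' := by
    intro a b
    simp only [toAdd_mul, Prod.fst_add, Prod.snd_add, zpow_add, Units.val_mul]
    ring

noncomputable def ev (u v : ℂˣ) : Laurent2 →ₐ[ℂ] ℂ :=
  AddMonoidAlgebra.lift ℂ ℂ (ℤ × ℤ) (evchar u v)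

lemma ev_zmon (u v : ℂˣ) (α : ℤ × ℤ) :
    ev u v (zmon α) = ((u ^ α.1 * v ^ α.2 : ℂˣ) : ℂ) := by
  simp [ev, zmon, evchar]

lemma ev_Ibase (u v : ℂˣ) (hu : (u:ℂ)^4 = 1) (hv : (v:ℂ)^2 = 1) :
    ∀ x ∈ Ibase, ev u v x = 0 := by
  have hu' : u ^ (4:ℤ) = 1 := by
    ext; push_cast [zpow_natCast]; exact hu
  have hv' : v ^ (2:ℤ) = 1 := by
    ext; push_cast [zpow_natCast]; exact hv
  have hspan : Ibase ≤ RingHom.ker (ev u v).toRingHom := by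
    rw [Ibase, Ideal.span_le]
    intro x hx
    simp only [Set.mem_insert_iff, Set.mem_singleton_iff] at hx
    rcases hx with rfl | rfl <;>
      · simp only [SetLike.mem_coe, RingHom.mem_ker, AlgHom.toRingHom_eq_coe,
          RingHom.coe_coe, map_sub, map_one, ev_zmon, sub_eq_zero]
        simp [hu', hv']
  intro x hx
  exact hspan hx

lemma key (u v : ℂˣ) (hu : (u:ℂ)^4 = 1) (hv : (v:ℂ)^2 = 1)
    (huv : (u:ℂ) ≠ 1 ∨ (v:ℂ) ≠ 1) (f : Laurent2)
    (h1 : f * (zmon (1, 0) - 1) ∈ Ibase) (h2 : f * (zmon (0, 1) - 1) ∈ Ibase) :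
    ev u v f = 0 := by
  have e1 : ev u v f * ((u:ℂ) - 1) = 0 := by
    have := ev_Ibase u v hu hv _ h1
    rw [map_mul, map_sub, map_one, ev_zmon] at this
    simpa using this
  have e2 : ev u v f * ((v:ℂ) - 1) = 0 := by
    have := ev_Ibase u v hu hv _ h2
    rw [map_mul, map_sub, map_one, ev_zmon] at this
    simpa using this
  rcases huv with h | h
  · rcases mul_eq_zero.1 e1 with h' | h'
    · exact h'
    · exact absurd (sub_eq_zero.1 h') h
  · rcases mul_eq_zero.1 e2 with h' | h'
    · exact h'
    · exact absurd (sub_eq_zero.1 h') h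

lemma sum_SS {M : Type*} [AddCommMonoid M] (g : ℤ × ℤ → M) :
    ∑ σ ∈ SS, g σ = g (0,0) + g (1,0) + g (2,0) + g (3,0)
      + g (0,1) + g (1,1) + g (2,1) + g (3,1) := by
  simp only [SS]
  rw [Finset.sum_insert (by decide), Finset.sum_insert (by decide),
    Finset.sum_insert (by decide), Finset.sum_insert (by decide),
    Finset.sum_insert (by decide), Finset.sum_insert (by decide),
    Finset.sum_insert (by decide), Finset.sum_singleton]
  abel

lemma ev_q (u v : ℂˣ) (c : ℤ × ℤ → ℂ) :
    ev u v (∑ σ ∈ SS, c σ • zmon σ)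
      = c (0,0) + c (1,0) * u + c (2,0) * (u:ℂ)^2 + c (3,0) * (u:ℂ)^3
        + (c (0,1) + c (1,1) * u + c (2,1) * (u:ℂ)^2 + c (3,1) * (u:ℂ)^3) * v := by
  rw [map_sum, sum_SS (fun σ => ev u v (c σ • zmon σ))]
  simp only [map_smul, ev_zmon, smul_eq_mul, Units.val_mul]
  norm_num [zpow_ofNat, zpow_one, zpow_zero]
  ring

noncomputable def pgen : Laurent2 :=
  (zmon (3, 0) + zmon (2, 0) + zmon (1, 0) + 1) * (zmon (0, 1) + 1)

noncomputable def Kid : Ideal Laurent2 :=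
  Ideal.span {pgen, zmon (4, 0) - 1, zmon (0, 2) - 1}

lemma zmon00 : zmon (0, 0) = 1 := rfl

lemma p_expand : pgen = ∑ σ ∈ SS, zmon σ := by
  rw [sum_SS]
  simp only [pgen, add_mul, mul_add, one_mul, mul_one, zmon_mul, Prod.mk_add_mk]
  norm_num [zmon00]
  abel

noncomputable def iU : ℂˣ :=
  ⟨Complex.I, -Complex.I, by rw [mul_neg, Complex.I_mul_I, neg_neg],
    by rw [neg_mul, Complex.I_mul_I, neg_neg]⟩

@[simp] lemma iU_val : ((iU : ℂˣ) : ℂ) = Complex.I := rfl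

lemma Ibase_le_Kid : Ibase ≤ Kid := by
  apply Ideal.span_mono
  intro x hx
  simp only [Set.mem_insert_iff, Set.mem_singleton_iff] at hx ⊢
  tauto

lemma main_sub (f : Laurent2)
    (h1 : f * (zmon (1, 0) - 1) ∈ Ibase) (h2 : f * (zmon (0, 1) - 1) ∈ Ibase) :
    f ∈ Kid := by
  obtain ⟨c, hc⟩ := reduction f
  have E : ∀ u v : ℂˣ, (u:ℂ)^4 = 1 → (v:ℂ)^2 = 1 → ((u:ℂ) ≠ 1 ∨ (v:ℂ) ≠ 1) →
      c (0,0) + c (1,0) * u + c (2,0) * (u:ℂ)^2 + c (3,0) * (u:ℂ)^3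
        + (c (0,1) + c (1,1) * u + c (2,1) * (u:ℂ)^2 + c (3,1) * (u:ℂ)^3) * v = 0 := by
    intro u v hu hv huv
    have h0 := key u v hu hv huv f h1 h2
    have hI := ev_Ibase u v hu hv _ hc
    rw [map_sub, h0, zero_sub, neg_eq_zero] at hI
    rw [← ev_q u v c, hI]
  have hI1 : (Complex.I) ≠ 1 := by simp [Complex.ext_iff]
  have hI2 : (-Complex.I) ≠ 1 := by simp [Complex.ext_iff]
  have e1 := E 1 (-1) (by norm_num) (by norm_num) (by right; norm_num)
  have e2 := E iU 1 (by norm_num [Complex.I_pow_four]) (by norm_num)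
    (by left; simpa using hI1)
  have e3 := E iU (-1) (by norm_num [Complex.I_pow_four]) (by norm_num)
    (by left; simpa using hI1)
  have e4 := E (-1) 1 (by norm_num) (by norm_num) (by left; norm_num)
  have e5 := E (-1) (-1) (by norm_num) (by norm_num) (by left; norm_num)
  have e6 := E (-iU) 1 (by norm_num [neg_pow, Complex.I_pow_four]) (by norm_num)
    (by left; simpa using hI2)
  have e7 := E (-iU) (-1) (by norm_num [neg_pow, Complex.I_pow_four]) (by norm_num)
    (by left; simpa using hI2)
  simp only [Units.val_one, Units.val_neg, iU_val, mul_one, mul_neg, one_mul] at e1 e2 e3 e4 e5 e6 e7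
  have t1 : c (1,0) = c (0,0) := by
    linear_combination ((-1/8) + (-1/8) * Complex.I) * e2 + ((-1/8) + (-1/8) * Complex.I) * e3 + ((-1/4)) * e4 + ((-1/4)) * e5 + ((-1/8) + (1/8) * Complex.I) * e6 + ((-1/8) + (1/8) * Complex.I) * e7 + ((1/2) * c (1,0) + (1/2) * c (2,0) + (1/2) * c (3,0) * Complex.I^2 + (-1/2) * c (3,0)) * Complex.I_sq
  have t2 : c (2,0) = c (0,0) := by
    linear_combination ((-1/4)) * e2 + ((-1/4)) * e3 + ((-1/4)) * e6 + ((-1/4)) * e7 + ((1) * c (2,0)) * Complex.I_sq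
  have t3 : c (3,0) = c (0,0) := by
    linear_combination ((-1/8) + (1/8) * Complex.I) * e2 + ((-1/8) + (1/8) * Complex.I) * e3 + ((-1/4)) * e4 + ((-1/4)) * e5 + ((-1/8) + (-1/8) * Complex.I) * e6 + ((-1/8) + (-1/8) * Complex.I) * e7 + ((-1/2) * c (1,0) + (1/2) * c (2,0) + (-1/2) * c (3,0) * Complex.I^2 + (1/2) * c (3,0)) * Complex.I_sq
  have t4 : c (0,1) = c (0,0) := by
    linear_combination ((-1/4)) * e1 + ((-1/4)) * e3 + ((-1/4)) * e5 + ((-1/4)) * e7 + ((1/2) * c (2,0) + (-1/2) * c (2,1)) * Complex.I_sq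
  have t5 : c (1,1) = c (0,0) := by
    linear_combination ((-1/4)) * e1 + ((-1/8) + (-1/8) * Complex.I) * e2 + ((-1/8) + (1/8) * Complex.I) * e3 + ((-1/4)) * e4 + ((-1/8) + (1/8) * Complex.I) * e6 + ((-1/8) + (-1/8) * Complex.I) * e7 + ((1/2) * c (2,0) + (1/2) * c (1,1) + (1/2) * c (3,1) * Complex.I^2 + (-1/2) * c (3,1)) * Complex.I_sq
  have t6 : c (2,1) = c (0,0) := by
    linear_combination ((-1/4)) * e1 + ((-1/4)) * e2 + ((-1/4)) * e5 + ((-1/4)) * e6 + ((1/2) * c (2,0) + (1/2) * c (2,1)) * Complex.I_sq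
  have t7 : c (3,1) = c (0,0) := by
    linear_combination ((-1/4)) * e1 + ((-1/8) + (1/8) * Complex.I) * e2 + ((-1/8) + (-1/8) * Complex.I) * e3 + ((-1/4)) * e4 + ((-1/8) + (-1/8) * Complex.I) * e6 + ((-1/8) + (1/8) * Complex.I) * e7 + ((1/2) * c (2,0) + (-1/2) * c (1,1) + (-1/2) * c (3,1) * Complex.I^2 + (1/2) * c (3,1)) * Complex.I_sq
  have hq : (∑ σ ∈ SS, c σ • zmon σ) = c (0,0) • pgen := by
    rw [p_expand, Finset.smul_sum]
    apply Finset.sum_congr rfl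
    intro σ hσ
    simp only [SS, Finset.mem_insert, Finset.mem_singleton] at hσ
    rcases hσ with rfl | rfl | rfl | rfl | rfl | rfl | rfl | rfl <;>
      simp only [t1, t2, t3, t4, t5, t6, t7]
  have hf : f = (f - ∑ σ ∈ SS, c σ • zmon σ) + c (0,0) • pgen := by
    rw [← hq]; ring
  rw [hf]
  refine add_mem (Ibase_le_Kid hc) ?_
  rw [Algebra.smul_def]
  exact Ideal.mul_mem_left _ _ (Ideal.subset_span (by simp))

lemma span_base_eq :
    Ideal.span {zmon (4, 0) - 1, zmon (0, 2) - 1}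
      = Ideal.span {zmon (4, 0) - 1, zmon (-4, 2) - 1} := by
  apply le_antisymm <;> rw [Ideal.span_le] <;> intro x hx <;>
    simp only [Set.mem_insert_iff, Set.mem_singleton_iff] at hx
  · rcases hx with rfl | rfl
    · exact Ideal.subset_span (by simp)
    · have h : zmon (0, 2) - 1
          = zmon (4, 0) * (zmon (-4, 2) - 1) + (zmon (4, 0) - 1) := by
        rw [mul_sub, zmon_mul, mul_one, Prod.mk_add_mk]
        norm_num
      rw [SetLike.mem_coe, h]
      exact add_mem (Ideal.mul_mem_left _ _ (Ideal.subset_span (by simp)))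
        (Ideal.subset_span (by simp))
  · rcases hx with rfl | rfl
    · exact Ideal.subset_span (by simp)
    · have h : zmon (-4, 2) - 1
          = zmon (-4, 0) * (zmon (0, 2) - 1) - zmon (-4, 0) * (zmon (4, 0) - 1) := by
        rw [mul_sub, mul_sub, zmon_mul, zmon_mul, mul_one, Prod.mk_add_mk, Prod.mk_add_mk]
        norm_num
        exact zmon_zero.symm
      rw [SetLike.mem_coe, h]
      exact sub_mem (Ideal.mul_mem_left _ _ (Ideal.subset_span (by simp)))
        (Ideal.mul_mem_left _ _ (Ideal.subset_span (by simp)))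

lemma mem_colon_of (f : Laurent2)
    (hx : f * (zmon (1, 0) - 1) ∈ Ibase) (hy : f * (zmon (0, 1) - 1) ∈ Ibase) :
    f ∈ Ibase.colon Jid := by
  rw [Submodule.mem_colon]
  intro p hp
  rw [smul_eq_mul]
  have hp' : p ∈ Ideal.span {zmon (1, 0) - 1, zmon (0, 1) - 1} := hp
  clear hp
  induction hp' using Submodule.span_induction with
  | mem x h =>
      simp only [Set.mem_insert_iff, Set.mem_singleton_iff] at h
      rcases h with rfl | rfl
      · exact hx
      · exact hy
  | zero => simp
  | add x y _ _ ihx ihy => rw [mul_add]; exact add_mem ihx ihy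
  | smul r x _ ih =>
      rw [smul_eq_mul, mul_left_comm]
      exact Ideal.mul_mem_left _ _ ih

lemma idp1 : pgen * (zmon (1, 0) - 1) = (zmon (4, 0) - 1) * (zmon (0, 1) + 1) := by
  simp only [pgen, add_mul, mul_add, sub_mul, mul_sub, one_mul, mul_one, zmon_mul,
    Prod.mk_add_mk]
  norm_num
  abel

lemma idp2 : pgen * (zmon (0, 1) - 1)
    = (zmon (3, 0) + zmon (2, 0) + zmon (1, 0) + 1) * (zmon (0, 2) - 1) := by
  simp only [pgen, add_mul, mul_add, sub_mul, mul_sub, one_mul, mul_one, zmon_mul,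
    Prod.mk_add_mk]
  norm_num
  abel

/-- The two quotient ideals coincide, and the common ideal is generated by
`(z₁³ + z₁² + z₁ + 1)(z₂ + 1)`, `z₁⁴ − 1` and `z₂² − 1`. -/
theorem stmt11 :
    I0 = I1 ∧
    I0 = Ideal.span
      {(zmon (3, 0) + zmon (2, 0) + zmon (1, 0) + 1) * (zmon (0, 1) + 1),
        zmon (4, 0) - 1, zmon (0, 2) - 1} := by
  constructor
  · unfold I0 I1
    rw [span_base_eq]
  · apply le_antisymm
    · intro f hf
      have h1 : f * (zmon (1, 0) - 1) ∈ Ibase := by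
        simpa [smul_eq_mul, Ibase] using Submodule.mem_colon.mp hf (zmon (1, 0) - 1)
          (Ideal.subset_span (by simp))
      have h2 : f * (zmon (0, 1) - 1) ∈ Ibase := by
        simpa [smul_eq_mul, Ibase] using Submodule.mem_colon.mp hf (zmon (0, 1) - 1)
          (Ideal.subset_span (by simp))
      exact main_sub f h1 h2
    · rw [Ideal.span_le]
      intro x hx
      simp only [Set.mem_insert_iff, Set.mem_singleton_iff] at hx
      rcases hx with rfl | rfl | rfl
      · exact mem_colon_of pgen (by rw [idp1]; exact Ideal.mul_mem_right _ _ gen1_mem)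
          (by rw [idp2]; exact Ideal.mul_mem_left _ _ gen2_mem)
      · exact mem_colon_of _ (Ideal.mul_mem_right _ _ gen1_mem)
          (Ideal.mul_mem_right _ _ gen1_mem)
      · exact mem_colon_of _ (Ideal.mul_mem_right _ _ gen2_mem)
          (Ideal.mul_mem_right _ _ gen2_mem)
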